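/- Let μ denote the eigenvalue function of D on the basis of 𝓗, i.e. μ = 2n+1 on u^n_{ij} and μ = −2n on d^n_{ij}. Then for a real number s > 0, the family ((1 + μ²)^{−s/2}) indexed by the basis of 𝓗 is summable if and only if s > 3. -/

import Mathlib

noncomputable section

open Real

/-- Validity of an index triple `(N, I, J)` (with `n = N/2`, `i = I/2`, `j = J/2`) for the basis
vectors `u^n_{ij}` of `𝓗`: `n ∈ ½ℤ₊`, `i ∈ {-n, …, n}`, `j ∈ {-n-1/2, …, n+1/2}`. -/
abbrev validU (x : ℤ × ℤ × ℤ) : Prop :=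
  0 ≤ x.1 ∧ |x.2.1| ≤ x.1 ∧ (x.1 + x.2.1) % 2 = 0 ∧
    |x.2.2| ≤ x.1 + 1 ∧ (x.1 + 1 + x.2.2) % 2 = 0

/-- Validity of an index triple `(N, I, J)` (with `n = N/2`, `i = I/2`, `j = J/2`) for the basis
vectors `d^n_{ij}` of `𝓗`: `n ≥ 1/2`, `i ∈ {-n, …, n}`, `j ∈ {-n+1/2, …, n-1/2}`. -/
abbrev validD (x : ℤ × ℤ × ℤ) : Prop :=
  1 ≤ x.1 ∧ |x.2.1| ≤ x.1 ∧ (x.1 + x.2.1) % 2 = 0 ∧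
    |x.2.2| ≤ x.1 - 1 ∧ (x.1 + 1 + x.2.2) % 2 = 0

abbrev IdxW : Type := {x : ℤ × ℤ × ℤ // validU x} ⊕ {x : ℤ × ℤ × ℤ // validD x}

/-- The Hilbert space `𝓗` with orthonormal basis `{u^n_{ij}} ∪ {d^n_{ij}}`. -/
abbrev Wsp : Type := lp (fun _ : IdxW => ℂ) 2

/-- The basis vector `u^n_{ij}` of `𝓗` (zero if out of range). -/
def eU (N I J : ℤ) : Wsp :=
  if h : validU (N, I, J) then lp.single 2 (Sum.inl ⟨(N, I, J), h⟩ : IdxW) (1 : ℂ) else 0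

/-- The basis vector `d^n_{ij}` of `𝓗` (zero if out of range, in particular for
`j = ±(n+1/2)`). -/
def eD (N I J : ℤ) : Wsp :=
  if h : validD (N, I, J) then lp.single 2 (Sum.inr ⟨(N, I, J), h⟩ : IdxW) (1 : ℂ) else 0

/-- the eigenvalue of `D` on a basis vector of `𝓗`: `D u^n_{ij} = (2n+1) u^n_{ij}` and
`D d^n_{ij} = -2n d^n_{ij}` (here `n = N/2`) -/
def muW : IdxW → ℝ :=
  Sum.elim (fun u => (u.1.1 : ℝ) + 1) (fun d => -(d.1.1 : ℝ))

/-! ### Auxiliary lemmas -/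

section Aux

/-- Summability of shifted rpow series. -/
lemma summable_shift_rpow (r : ℝ) :
    Summable (fun m : ℕ => ((m : ℝ) + 1) ^ r) ↔ r < -1 := by
  have h2 : (fun m : ℕ => ((m : ℝ) + 1) ^ r) = fun m : ℕ => (((m + 1 : ℕ) : ℝ)) ^ r := by
    funext m; push_cast; ring_nf
  rw [h2]
  exact (summable_nat_add_iff (f := fun n : ℕ => ((n : ℝ)) ^ r) 1).trans
    Real.summable_nat_rpow

lemma sq_rpow_neg (s : ℝ) (x : ℝ) (hx : 0 ≤ x) : (x ^ 2) ^ (-s / 2) = x ^ (-s) := by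
  rw [← Real.rpow_natCast x 2, ← Real.rpow_mul hx]
  congr 1
  push_cast
  ring

/-- Upper bound: if `(m+1)^2/2 ≤ b` then `b ^ (-s/2) ≤ 2^(s/2) * (m+1)^(-s)`. -/
lemma rpow_upper (s : ℝ) (hs : 0 < s) (m : ℕ) (b : ℝ)
    (hb : ((m : ℝ) + 1) ^ 2 / 2 ≤ b) :
    b ^ (-s / 2) ≤ 2 ^ (s / 2) * ((m : ℝ) + 1) ^ (-s) := by
  have h1 : (0 : ℝ) < ((m : ℝ) + 1) ^ 2 / 2 := by positivity
  have h2 : b ^ (-s / 2) ≤ (((m : ℝ) + 1) ^ 2 / 2) ^ (-s / 2) :=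
    Real.rpow_le_rpow_of_nonpos h1 hb (by linarith)
  have h3 : (((m : ℝ) + 1) ^ 2 / 2) ^ (-s / 2)
      = 2 ^ (s / 2) * ((m : ℝ) + 1) ^ (-s) := by
    rw [Real.div_rpow (by positivity) (by norm_num), sq_rpow_neg s _ (by positivity)]
    have : (-s / 2 : ℝ) = -(s / 2) := by ring
    rw [this, Real.rpow_neg (by norm_num : (0:ℝ) ≤ 2), div_eq_mul_inv, inv_inv, mul_comm]
  linarith [h3 ▸ h2]

/-- Lower bound: `2^(-s/2) * (m+1)^(-s) ≤ (1 + (m+1)^2) ^ (-s/2)`. -/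
lemma rpow_lower (s : ℝ) (hs : 0 < s) (m : ℕ) :
    2 ^ (-s / 2) * ((m : ℝ) + 1) ^ (-s) ≤ (1 + ((m : ℝ) + 1) ^ 2) ^ (-s / 2) := by
  have h0 : (0 : ℝ) < 1 + ((m : ℝ) + 1) ^ 2 := by positivity
  have h1 : (1 : ℝ) + ((m : ℝ) + 1) ^ 2 ≤ 2 * ((m : ℝ) + 1) ^ 2 := by
    nlinarith [sq_nonneg ((m : ℝ) + 1), sq_nonneg ((m : ℝ)), Nat.cast_nonneg (α := ℝ) m]
  have h2 : (2 * ((m : ℝ) + 1) ^ 2) ^ (-s / 2) ≤ (1 + ((m : ℝ) + 1) ^ 2) ^ (-s / 2) :=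
    Real.rpow_le_rpow_of_nonpos h0 h1 (by linarith)
  have h3 : (2 * ((m : ℝ) + 1) ^ 2) ^ (-s / 2)
      = 2 ^ (-s / 2) * ((m : ℝ) + 1) ^ (-s) := by
    rw [Real.mul_rpow (by norm_num) (by positivity), sq_rpow_neg s _ (by positivity)]
  linarith [h3 ▸ h2]

/-- General summability criterion via fiber counting. -/
lemma summable_of_fiber_bound {ι ι' : Type*} [DecidableEq ι']
    (f : ι → ℝ) (g : ι → ℕ) (a c : ℕ → ℝ)
    (hf0 : ∀ x, 0 ≤ f x) (hfa : ∀ x, f x ≤ a (g x)) (ha0 : ∀ m, 0 ≤ a m)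
    (hc0 : ∀ m, 0 ≤ c m)
    (e : ι → ι') (he : Function.Injective e) (t : ℕ → Finset ι')
    (het : ∀ x, e x ∈ t (g x)) (hct : ∀ m, ((t m).card : ℝ) ≤ c m)
    (hca : Summable (fun m => c m * a m)) : Summable f := by
  classical
  refine summable_of_sum_le (c := ∑' m, c m * a m) (fun x => hf0 x) (fun u => ?_)
  calc ∑ x ∈ u, f x ≤ ∑ x ∈ u, a (g x) := Finset.sum_le_sum fun x _ => hfa x
    _ = ∑ m ∈ u.image g, (u.filter (fun x => g x = m)).card • a m := Finset.sum_comp a g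
    _ ≤ ∑ m ∈ u.image g, c m * a m := by
        refine Finset.sum_le_sum fun m _ => ?_
        rw [nsmul_eq_mul]
        refine mul_le_mul_of_nonneg_right ?_ (ha0 m)
        have hcard : (u.filter (fun x => g x = m)).card ≤ (t m).card := by
          refine Finset.card_le_card_of_injOn e (fun x hx => ?_) he.injOn
          rw [Finset.mem_coe, Finset.mem_filter] at hx
          rw [← hx.2]
          exact het x
        calc ((u.filter (fun x => g x = m)).card : ℝ) ≤ ((t m).card : ℝ) := by
              exact_mod_cast hcard
          _ ≤ c m := hct m
    _ ≤ ∑' m, c m * a m :=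
        Summable.sum_le_tsum _ (fun m _ => mul_nonneg (hc0 m) (ha0 m)) hca

def gIdx : IdxW → ℕ := Sum.elim (fun u => u.1.1.toNat) (fun d => d.1.1.toNat)

def eIdx : IdxW → Bool × ℤ × ℤ × ℤ :=
  Sum.elim (fun u => (false, u.1)) (fun d => (true, d.1))

lemma eIdx_inj : Function.Injective eIdx := by
  rintro (⟨x, hx⟩ | ⟨x, hx⟩) (⟨y, hy⟩ | ⟨y, hy⟩) h <;>
    simp_all [eIdx, Prod.ext_iff]

def tIdx (m : ℕ) : Finset (Bool × ℤ × ℤ × ℤ) :=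
  ({false, true} : Finset Bool) ×ˢ ({(m : ℤ)} : Finset ℤ) ×ˢ
    Finset.Icc (-(m : ℤ) - 1) ((m : ℤ) + 1) ×ˢ Finset.Icc (-(m : ℤ) - 1) ((m : ℤ) + 1)

lemma mem_tIdx (x : IdxW) : eIdx x ∈ tIdx (gIdx x) := by
  rcases x with ⟨⟨N, I, J⟩, h1, h2, h3, h4, h5⟩ | ⟨⟨N, I, J⟩, h1, h2, h3, h4, h5⟩
  · have h1' : 0 ≤ N := h1
    have h2' : -N ≤ I ∧ I ≤ N := abs_le.mp h2
    have h4' : -(N + 1) ≤ J ∧ J ≤ N + 1 := abs_le.mp h4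
    simp only [eIdx, gIdx, tIdx, Sum.elim_inl, Finset.mem_product,
      Finset.mem_insert, Finset.mem_singleton, Finset.mem_Icc]
    refine ⟨by simp, by omega, by omega, by omega⟩
  · have h1' : 1 ≤ N := h1
    have h2' : -N ≤ I ∧ I ≤ N := abs_le.mp h2
    have h4' : -(N - 1) ≤ J ∧ J ≤ N - 1 := abs_le.mp h4
    simp only [eIdx, gIdx, tIdx, Sum.elim_inr, Finset.mem_product,
      Finset.mem_insert, Finset.mem_singleton, Finset.mem_Icc]
    refine ⟨by simp, by omega, by omega, by omega⟩

lemma card_tIdx (m : ℕ) : ((tIdx m).card : ℝ) ≤ 2 * (2 * (m : ℝ) + 3) ^ 2 := by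
  have hicc : ((m : ℤ) + 1 + 1 - (-(m : ℤ) - 1)).toNat = 2 * m + 3 := by omega
  have hb : ({false, true} : Finset Bool).card = 2 := by decide
  have h : (tIdx m).card = 2 * (1 * ((2 * m + 3) * (2 * m + 3))) := by
    simp only [tIdx, Finset.card_product, Int.card_Icc, hicc, hb, Finset.card_singleton]
  rw [h]
  push_cast
  nlinarith [sq_nonneg ((m : ℝ)), Nat.cast_nonneg (α := ℝ) m]

end Aux

/-- For `s > 0`, the family `((1 + μ²)^(-s/2))`, indexed by the orthonormal
basis of `𝓗`, is summable if and only if `s > 3`; here `μ` is the eigenvalue function of `D`. -/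
theorem D_summability (s : ℝ) (hs : 0 < s) :
    Summable (fun x : IdxW => (1 + muW x ^ 2) ^ (-s / 2)) ↔ 3 < s := by
  classical
  set f : IdxW → ℝ := fun x => (1 + muW x ^ 2) ^ (-s / 2) with hf
  have hf0 : ∀ x, 0 ≤ f x := fun x => Real.rpow_nonneg (by positivity) _
  constructor
  · -- Summable → 3 < s
    intro hsum
    -- restrict to the `u` part
    have hu : Summable (fun x : {x : ℤ × ℤ × ℤ // validU x} => f (Sum.inl x)) :=
      hsum.comp_injective Sum.inl_injective
    set a' : ℕ → ℝ := fun m => (1 + ((m : ℝ) + 1) ^ 2) ^ (-s / 2) with ha'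
    have ha'0 : ∀ m, 0 ≤ a' m := fun m => Real.rpow_nonneg (by positivity) _
    -- explicit finsets of valid indices
    set T : ℕ → Finset (ℤ × ℤ × ℤ) := fun m =>
      ((Finset.range (m + 1)) ×ˢ (Finset.range (m + 1))).image
        (fun kl => ((m : ℤ), 2 * (kl.1 : ℤ) - m, 2 * (kl.2 : ℤ) - m - 1)) with hT
    have hTvalid : ∀ m, ∀ p ∈ T m, validU p := by
      intro m p hp
      simp only [hT, Finset.mem_image, Finset.mem_product, Finset.mem_range] at hp
      obtain ⟨⟨k, l⟩, ⟨hk, hl⟩, rfl⟩ := hp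
      refine ⟨?_, ?_, ?_, ?_, ?_⟩
      · show (0 : ℤ) ≤ (m : ℤ)
        omega
      · show |2 * (k : ℤ) - (m : ℤ)| ≤ (m : ℤ)
        rw [abs_le]; omega
      · show ((m : ℤ) + (2 * (k : ℤ) - (m : ℤ))) % 2 = 0
        omega
      · show |2 * (l : ℤ) - (m : ℤ) - 1| ≤ (m : ℤ) + 1
        rw [abs_le]; omega
      · show ((m : ℤ) + 1 + (2 * (l : ℤ) - (m : ℤ) - 1)) % 2 = 0
        omega
    have hTfst : ∀ m, ∀ p ∈ T m, p.1 = (m : ℤ) := by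
      intro m p hp
      simp only [hT, Finset.mem_image, Finset.mem_product, Finset.mem_range] at hp
      obtain ⟨⟨k, l⟩, _, rfl⟩ := hp
      rfl
    have hTcard : ∀ m, (T m).card = (m + 1) ^ 2 := by
      intro m
      rw [hT]
      rw [Finset.card_image_of_injective _ ?_, Finset.card_product, Finset.card_range]
      · ring
      · intro ⟨k, l⟩ ⟨k', l'⟩ hkl
        simp only [Prod.mk.injEq] at hkl ⊢
        omega
    set S : ℕ → Finset {x : ℤ × ℤ × ℤ // validU x} := fun m => (T m).subtype validU with hS
    have hSsum : ∀ m, ∑ x ∈ S m, f (Sum.inl x) = ((m : ℝ) + 1) ^ 2 * a' m := by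
      intro m
      have key : ∑ x ∈ S m, f (Sum.inl x)
          = ∑ p ∈ T m, (1 + ((p.1 : ℝ) + 1) ^ 2) ^ (-s / 2) :=
        Finset.sum_subtype_of_mem
          (fun p => (1 + ((p.1 : ℝ) + 1) ^ 2) ^ (-s / 2)) (hTvalid m)
      rw [key]
      have : ∀ p ∈ T m, (1 + ((p.1 : ℝ) + 1) ^ 2) ^ (-s / 2) = a' m := by
        intro p hp
        rw [hTfst m p hp]
        push_cast
        rfl
      rw [Finset.sum_congr rfl this, Finset.sum_const, hTcard m, nsmul_eq_mul]
      push_cast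
      ring
    -- partial sums are bounded
    have hbdd : ∀ M, ∑ m ∈ Finset.range M, ((m : ℝ) + 1) ^ 2 * a' m
        ≤ ∑' x : {x : ℤ × ℤ × ℤ // validU x}, f (Sum.inl x) := by
      intro M
      have hdisj : ∀ m ∈ (Finset.range M : Finset ℕ), ∀ m' ∈ (Finset.range M : Finset ℕ),
          m ≠ m' → Disjoint (S m) (S m') := by
        intro m _ m' _ hne
        rw [Finset.disjoint_left]
        intro x hx hx'
        rw [hS, Finset.mem_subtype] at hx hx'
        have h1 := hTfst m _ hx
        have h2 := hTfst m' _ hx'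
        rw [h1] at h2
        exact hne (by exact_mod_cast h2)
      calc ∑ m ∈ Finset.range M, ((m : ℝ) + 1) ^ 2 * a' m
          = ∑ m ∈ Finset.range M, ∑ x ∈ S m, f (Sum.inl x) := by
            exact Finset.sum_congr rfl fun m _ => (hSsum m).symm
        _ = ∑ x ∈ (Finset.range M).biUnion S, f (Sum.inl x) :=
            (Finset.sum_biUnion hdisj).symm
        _ ≤ ∑' x : {x : ℤ × ℤ × ℤ // validU x}, f (Sum.inl x) :=
            Summable.sum_le_tsum _ (fun x _ => hf0 _) hu
    have hA : Summable (fun m : ℕ => ((m : ℝ) + 1) ^ 2 * a' m) :=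
      summable_of_sum_range_le
        (fun m => mul_nonneg (by positivity) (ha'0 m)) hbdd
    -- compare with `(m+1)^(2-s)`
    have hcomp : Summable (fun m : ℕ => 2 ^ (-s / 2) * ((m : ℝ) + 1) ^ (2 - s)) := by
      refine hA.of_nonneg_of_le (fun m => by positivity) (fun m => ?_)
      have h1 := rpow_lower s hs m
      have h2 : ((m : ℝ) + 1) ^ (2 - s)
          = ((m : ℝ) + 1) ^ 2 * ((m : ℝ) + 1) ^ (-s) := by
        rw [show (2 - s : ℝ) = (2 : ℝ) + (-s) by ring,
          Real.rpow_add (by positivity), Real.rpow_two]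
      rw [h2]
      calc 2 ^ (-s / 2) * (((m : ℝ) + 1) ^ 2 * ((m : ℝ) + 1) ^ (-s))
          = ((m : ℝ) + 1) ^ 2 * (2 ^ (-s / 2) * ((m : ℝ) + 1) ^ (-s)) := by ring
        _ ≤ ((m : ℝ) + 1) ^ 2 * a' m :=
            mul_le_mul_of_nonneg_left h1 (by positivity)
    have h2s : (2 : ℝ) ^ (-s / 2) ≠ 0 := by positivity
    have := (summable_mul_left_iff h2s).mp hcomp
    have := (summable_shift_rpow (2 - s)).mp this
    linarith
  · -- 3 < s → Summable
    intro h3s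
    set a : ℕ → ℝ := fun m => 2 ^ (s / 2) * ((m : ℝ) + 1) ^ (-s) with ha
    set c : ℕ → ℝ := fun m => 2 * (2 * (m : ℝ) + 3) ^ 2 with hc
    have ha0 : ∀ m, 0 ≤ a m := fun m => by positivity
    have hc0 : ∀ m, 0 ≤ c m := fun m => by positivity
    refine summable_of_fiber_bound f gIdx a c hf0 ?_ ha0 hc0 eIdx eIdx_inj tIdx
      mem_tIdx card_tIdx ?_
    · -- pointwise bound
      rintro (⟨⟨N, I, J⟩, hv⟩ | ⟨⟨N, I, J⟩, hv⟩)
      · have hN0 : (0 : ℤ) ≤ N := hv.1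
        have hN : ((N.toNat : ℕ) : ℝ) = (N : ℝ) := by
          exact_mod_cast Int.toNat_of_nonneg hN0
        simp only [hf, gIdx, muW, Sum.elim_inl]
        refine rpow_upper s hs _ _ ?_
        rw [hN]
        nlinarith [sq_nonneg ((N : ℝ) + 1)]
      · have hN1 : (1 : ℤ) ≤ N := hv.1
        have hN : ((N.toNat : ℕ) : ℝ) = (N : ℝ) := by
          exact_mod_cast Int.toNat_of_nonneg (by omega)
        simp only [hf, gIdx, muW, Sum.elim_inr]
        refine rpow_upper s hs _ _ ?_
        rw [hN]
        nlinarith [sq_nonneg ((N : ℝ) - 1)]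
    · -- summability of the majorant
      have hmaj : Summable (fun m : ℕ => 18 * 2 ^ (s / 2) * ((m : ℝ) + 1) ^ (2 - s)) :=
        ((summable_shift_rpow (2 - s)).mpr (by linarith)).mul_left _
      refine hmaj.of_nonneg_of_le
        (fun m => mul_nonneg (hc0 m) (ha0 m)) (fun m => ?_)
      have h2 : ((m : ℝ) + 1) ^ (2 - s)
          = ((m : ℝ) + 1) ^ 2 * ((m : ℝ) + 1) ^ (-s) := by
        rw [show (2 - s : ℝ) = (2 : ℝ) + (-s) by ring,
          Real.rpow_add (by positivity), Real.rpow_two]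
      have hrs : (0 : ℝ) ≤ ((m : ℝ) + 1) ^ (-s) := Real.rpow_nonneg (by positivity) _
      have h2pos : (0 : ℝ) < 2 ^ (s / 2) := by positivity
      rw [h2, hc, ha]
      calc 2 * (2 * (m : ℝ) + 3) ^ 2 * (2 ^ (s / 2) * ((m : ℝ) + 1) ^ (-s))
          ≤ 18 * ((m : ℝ) + 1) ^ 2 * (2 ^ (s / 2) * ((m : ℝ) + 1) ^ (-s)) := by
            refine mul_le_mul_of_nonneg_right ?_ (by positivity)
            nlinarith [sq_nonneg ((m : ℝ)), Nat.cast_nonneg (α := ℝ) m]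
        _ = 18 * 2 ^ (s / 2) * (((m : ℝ) + 1) ^ 2 * ((m : ℝ) + 1) ^ (-s)) := by ring
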